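/- arXiv:0803.3293 — 5 statements merged into one kernel-verified Lean document; each statement's English description precedes it below -/
import Mathlib

section
/- If T and T' are rank-homogeneous subtrees of ω^{<ω} such that for every level n the sets of ordinal tree ranks realized by elements of T_n and T'_n coincide, and T_n contains an element of rank ∞ iff T'_n does, then T ≅ T'. -/
/-- A tree is a set of finite sequences of naturals closed under initial
segments. -/
def IsTree (T : Set (List ℕ)) : Prop :=
  ∀ s ∈ T, ∀ t : List ℕ, t <+: s → t ∈ T

/-- `ρ` is the tree-rank function of `T`, where `ρ a = some α` means
`rk(a) = α` and `ρ a = none` means `rk(a) = ∞`:  a node has rank `∞` iff some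
successor does, and a ranked node has rank the least ordinal strictly above
the ranks of all its successors (so terminal nodes have rank `0`). -/
def IsTreeRank (T : Set (List ℕ)) (ρ : List ℕ → Option Ordinal) : Prop :=
  ∀ a ∈ T,
    (ρ a = none ↔ ∃ n : ℕ, a ++ [n] ∈ T ∧ ρ (a ++ [n]) = none) ∧
    ∀ α : Ordinal, ρ a = some α →
      (∀ n : ℕ, a ++ [n] ∈ T → ∃ β < α, ρ (a ++ [n]) = some β) ∧
      ∀ γ : Ordinal, (∀ n : ℕ, a ++ [n] ∈ T → ∃ β < γ, ρ (a ++ [n]) = some β) →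
        α ≤ γ

/-- `α < rk a`, where `rk a = ∞` counts as above every ordinal. -/
def RankGT (ρ : List ℕ → Option Ordinal) (a : List ℕ) (α : Ordinal) : Prop :=
  ρ a = none ∨ ∃ γ : Ordinal, ρ a = some γ ∧ α < γ

/-- `T` is rank-homogeneous: (1) if `a ∈ T_n`, `b ∈ T_{n+1}` with
`rk(b) = α < rk(a)`, then `a` has infinitely many successors of rank `α`;
(2) every node of rank `∞` has infinitely many successors of rank `∞`. -/
def RankHomogeneous (T : Set (List ℕ)) (ρ : List ℕ → Option Ordinal) : Prop :=
  (∀ a ∈ T, ∀ α : Ordinal,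
    (∃ b ∈ T, b.length = a.length + 1 ∧ ρ b = some α) →
    RankGT ρ a α →
    {k : ℕ | a ++ [k] ∈ T ∧ ρ (a ++ [k]) = some α}.Infinite) ∧
  (∀ a ∈ T, ρ a = none →
    {k : ℕ | a ++ [k] ∈ T ∧ ρ (a ++ [k]) = none}.Infinite)


/-- Extend a successor-matching rule `Φ prefix imagePrefix k` to whole lists. -/
def buildMap (Φ : List ℕ → List ℕ → ℕ → ℕ) : List ℕ → List ℕ
  | [] => []
  | k :: t => Φ t.reverse (buildMap Φ t).reverse k :: buildMap Φ t

def extMap (Φ : List ℕ → List ℕ → ℕ → ℕ) (a : List ℕ) : List ℕ :=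
  (buildMap Φ a.reverse).reverse

lemma extMap_nil (Φ : List ℕ → List ℕ → ℕ → ℕ) : extMap Φ [] = [] := rfl

lemma extMap_append (Φ : List ℕ → List ℕ → ℕ → ℕ) (a : List ℕ) (k : ℕ) :
    extMap Φ (a ++ [k]) = extMap Φ a ++ [Φ a (extMap Φ a) k] := by
  simp [extMap, buildMap]

/-- Matching bijection between two subsets of ℕ whose fibers under `f`, `f'`
are simultaneously infinite or empty. -/
lemma exists_good_pair {S S' : Set ℕ} {V : Type*} {f f' : ℕ → V}
    (h : ∀ v : V, ({k | k ∈ S ∧ f k = v}.Infinite ∧ {k | k ∈ S' ∧ f' k = v}.Infinite) ∨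
      ({k | k ∈ S ∧ f k = v} = ∅ ∧ {k | k ∈ S' ∧ f' k = v} = ∅)) :
    ∃ φ ψ : ℕ → ℕ,
      (∀ k ∈ S, φ k ∈ S' ∧ f' (φ k) = f k ∧ ψ (φ k) = k) ∧
      (∀ m ∈ S', ψ m ∈ S ∧ φ (ψ m) = m) := by
  classical
  have he : ∀ v : V, Nonempty
      ({x : S // f ↑x = v} ≃ {y : S' // f' ↑y = v}) := by
    intro v
    have e0 : {x : S // f ↑x = v} ≃ ↥{k | k ∈ S ∧ f k = v} :=
      ⟨fun x => ⟨x.1.1, x.1.2, x.2⟩, fun k => ⟨⟨k.1, k.2.1⟩, k.2.2⟩,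
        fun _ => rfl, fun _ => rfl⟩
    have e0' : {y : S' // f' ↑y = v} ≃ ↥{k | k ∈ S' ∧ f' k = v} :=
      ⟨fun x => ⟨x.1.1, x.1.2, x.2⟩, fun k => ⟨⟨k.1, k.2.1⟩, k.2.2⟩,
        fun _ => rfl, fun _ => rfl⟩
    rcases h v with ⟨h1, h2⟩ | ⟨h1, h2⟩
    · have i1 : Infinite ↥{k | k ∈ S ∧ f k = v} := h1.to_subtype
      have i2 : Infinite ↥{k | k ∈ S' ∧ f' k = v} := h2.to_subtype
      have i1' : Infinite {x : S // f ↑x = v} := Infinite.of_injective _ e0.symm.injective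
      have i2' : Infinite {y : S' // f' ↑y = v} := Infinite.of_injective _ e0'.symm.injective
      exact nonempty_equiv_of_countable
    · have i1 : IsEmpty ↥{k | k ∈ S ∧ f k = v} := Set.isEmpty_coe_sort.2 h1
      have i2 : IsEmpty ↥{k | k ∈ S' ∧ f' k = v} := Set.isEmpty_coe_sort.2 h2
      have i1' : IsEmpty {x : S // f ↑x = v} := e0.isEmpty
      have i2' : IsEmpty {y : S' // f' ↑y = v} := e0'.isEmpty
      exact ⟨Equiv.equivOfIsEmpty _ _⟩
  set e : ∀ v, {x : S // f ↑x = v} ≃ {y : S' // f' ↑y = v} :=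
    fun v => (he v).some with he_def
  set E : S ≃ S' := Equiv.ofFiberEquiv e with hE_def
  have hE : ∀ x : S, f' ↑(E x) = f ↑x := fun x => Equiv.ofFiberEquiv_map e x
  refine ⟨fun k => if h : k ∈ S then ↑(E ⟨k, h⟩) else 0,
    fun m => if h : m ∈ S' then ↑(E.symm ⟨m, h⟩) else 0, ?_, ?_⟩
  · intro k hk
    simp only [dif_pos hk]
    refine ⟨(E ⟨k, hk⟩).2, hE ⟨k, hk⟩, ?_⟩
    have hm : (↑(E ⟨k, hk⟩) : ℕ) ∈ S' := (E ⟨k, hk⟩).2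
    rw [dif_pos hm]
    have : (⟨↑(E ⟨k, hk⟩), hm⟩ : S') = E ⟨k, hk⟩ := Subtype.ext rfl
    rw [this, Equiv.symm_apply_apply]
  · intro m hm
    simp only [dif_pos hm]
    refine ⟨(E.symm ⟨m, hm⟩).2, ?_⟩
    have hk : (↑(E.symm ⟨m, hm⟩) : ℕ) ∈ S := (E.symm ⟨m, hm⟩).2
    rw [dif_pos hk]
    have : (⟨↑(E.symm ⟨m, hm⟩), hk⟩ : S) = E.symm ⟨m, hm⟩ := Subtype.ext rfl
    rw [this, Equiv.apply_symm_apply]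

lemma fiber_both {T T' : Set (List ℕ)} {ρ ρ' : List ℕ → Option Ordinal}
    (hρ : IsTreeRank T ρ)
    (hhom : RankHomogeneous T ρ) (hhom' : RankHomogeneous T' ρ')
    {a a' : List ℕ} (ha : a ∈ T) (ha' : a' ∈ T') (hlen : a'.length = a.length)
    (hρeq : ρ a = ρ' a')
    (hsub : ∀ α : Ordinal, (∃ b ∈ T, b.length = a.length + 1 ∧ ρ b = some α) →
      ∃ b ∈ T', b.length = a.length + 1 ∧ ρ' b = some α)
    (α : Ordinal)
    (hne : ∃ k, a ++ [k] ∈ T ∧ ρ (a ++ [k]) = some α) :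
    {k | a ++ [k] ∈ T ∧ ρ (a ++ [k]) = some α}.Infinite ∧
    {m | a' ++ [m] ∈ T' ∧ ρ' (a' ++ [m]) = some α}.Infinite := by
  obtain ⟨k, hk, hkα⟩ := hne
  have hgt : RankGT ρ a α := by
    cases h : ρ a with
    | none => exact Or.inl h
    | some γ =>
      obtain ⟨β, hβγ, hβ⟩ := ((hρ a ha).2 γ h).1 k hk
      rw [hkα] at hβ
      obtain rfl : α = β := Option.some_injective _ hβ
      exact Or.inr ⟨γ, h, hβγ⟩
  have hbT : ∃ b ∈ T, b.length = a.length + 1 ∧ ρ b = some α :=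
    ⟨a ++ [k], hk, by simp, hkα⟩
  have h1 := hhom.1 a ha α hbT hgt
  obtain ⟨b', hb', hbl', hbα'⟩ := hsub α hbT
  have hgt' : RankGT ρ' a' α := by
    unfold RankGT at hgt ⊢
    rw [← hρeq]
    exact hgt
  have h2 := hhom'.1 a' ha' α ⟨b', hb', by rw [hbl', hlen], hbα'⟩ hgt'
  exact ⟨h1, h2⟩

/-- If `T` and `T'` are rank-homogeneous trees such that for every level `n`
the sets of ordinal ranks realized in `T_n` and `T'_n` coincide, and `T_n`
has a node of rank `∞` iff `T'_n` does, then `T ≅ T'` (by a level-preserving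
bijection preserving the successor relation). -/
theorem rankHomogeneous_iso (T T' : Set (List ℕ)) (hT : IsTree T)
    (hT' : IsTree T') (ρ ρ' : List ℕ → Option Ordinal)
    (hρ : IsTreeRank T ρ) (hρ' : IsTreeRank T' ρ')
    (hhom : RankHomogeneous T ρ) (hhom' : RankHomogeneous T' ρ')
    (hranks : ∀ n : ℕ,
      {α : Ordinal | ∃ a ∈ T, a.length = n ∧ ρ a = some α} =
        {α : Ordinal | ∃ a ∈ T', a.length = n ∧ ρ' a = some α})
    (hinf : ∀ n : ℕ,
      (∃ a ∈ T, a.length = n ∧ ρ a = none) ↔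
        (∃ a ∈ T', a.length = n ∧ ρ' a = none)) :
    ∃ F : List ℕ → List ℕ,
      Set.BijOn F T T' ∧
      (∀ a ∈ T, (F a).length = a.length) ∧
      (∀ a ∈ T, ∀ k : ℕ, a ++ [k] ∈ T → ∃ m : ℕ, F (a ++ [k]) = F a ++ [m]) := by
  classical
  -- existence of a matching successor bijection at every valid pair of nodes
  have key : ∀ a a' : List ℕ, ∃ φ ψ : ℕ → ℕ,
      (a ∈ T ∧ a' ∈ T' ∧ a'.length = a.length ∧ ρ a = ρ' a') →
      ((∀ k : ℕ, a ++ [k] ∈ T →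
          (a' ++ [φ k] ∈ T' ∧ ρ' (a' ++ [φ k]) = ρ (a ++ [k]) ∧ ψ (φ k) = k)) ∧
       (∀ m : ℕ, a' ++ [m] ∈ T' → (a ++ [ψ m] ∈ T ∧ φ (ψ m) = m))) := by
    intro a a'
    by_cases hinv : a ∈ T ∧ a' ∈ T' ∧ a'.length = a.length ∧ ρ a = ρ' a'
    · obtain ⟨ha, ha', hlen, hρeq⟩ := hinv
      have hfib : ∀ v : Option Ordinal,
          ({k | k ∈ {k : ℕ | a ++ [k] ∈ T} ∧ ρ (a ++ [k]) = v}.Infinite ∧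
           {m | m ∈ {m : ℕ | a' ++ [m] ∈ T'} ∧ ρ' (a' ++ [m]) = v}.Infinite) ∨
          ({k | k ∈ {k : ℕ | a ++ [k] ∈ T} ∧ ρ (a ++ [k]) = v} = ∅ ∧
           {m | m ∈ {m : ℕ | a' ++ [m] ∈ T'} ∧ ρ' (a' ++ [m]) = v} = ∅) := by
        intro v
        have eS : {k | k ∈ {k : ℕ | a ++ [k] ∈ T} ∧ ρ (a ++ [k]) = v} =
            {k : ℕ | a ++ [k] ∈ T ∧ ρ (a ++ [k]) = v} := rfl
        have eS' : {m | m ∈ {m : ℕ | a' ++ [m] ∈ T'} ∧ ρ' (a' ++ [m]) = v} =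
            {m : ℕ | a' ++ [m] ∈ T' ∧ ρ' (a' ++ [m]) = v} := rfl
        rw [eS, eS']
        cases v with
        | none =>
          by_cases hn : ρ a = none
          · exact Or.inl ⟨hhom.2 a ha hn, hhom'.2 a' ha' (hρeq ▸ hn)⟩
          · refine Or.inr ⟨Set.eq_empty_iff_forall_notMem.2 ?_,
              Set.eq_empty_iff_forall_notMem.2 ?_⟩
            · intro k ⟨hk1, hk2⟩
              exact hn ((hρ a ha).1.2 ⟨k, hk1, hk2⟩)
            · intro m ⟨hm1, hm2⟩
              exact hn (hρeq.trans ((hρ' a' ha').1.2 ⟨m, hm1, hm2⟩))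
        | some α =>
          by_cases hne : ∃ k, a ++ [k] ∈ T ∧ ρ (a ++ [k]) = some α
          · refine Or.inl (fiber_both hρ hhom hhom' ha ha' hlen hρeq ?_ α hne)
            intro β hβ
            have : β ∈ {α : Ordinal | ∃ b ∈ T, b.length = a.length + 1 ∧
                ρ b = some α} := hβ
            rw [hranks (a.length + 1)] at this
            exact this
          · by_cases hne' : ∃ m, a' ++ [m] ∈ T' ∧ ρ' (a' ++ [m]) = some α
            · have := fiber_both hρ' hhom' hhom ha' ha hlen.symm hρeq.symm
                (by
                  intro β hβ
                  have h2 : β ∈ {α : Ordinal | ∃ b ∈ T', b.length = a'.length + 1 ∧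
                      ρ' b = some α} := hβ
                  rw [← hranks (a'.length + 1)] at h2
                  obtain ⟨b, hb, hbl, hbα⟩ := h2
                  exact ⟨b, hb, by rw [hbl, hlen], hbα⟩) α hne'
              obtain ⟨h1, h2⟩ := this
              have h2' : {k : ℕ | a ++ [k] ∈ T ∧ ρ (a ++ [k]) = some α}.Infinite := h2
              exact absurd h2'.nonempty (by simpa [Set.nonempty_def] using hne)
            · refine Or.inr ⟨Set.eq_empty_iff_forall_notMem.2 ?_,
                Set.eq_empty_iff_forall_notMem.2 ?_⟩
              · intro k hk
                exact hne ⟨k, hk.1, hk.2⟩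
              · intro m hm
                exact hne' ⟨m, hm.1, hm.2⟩
      obtain ⟨φ, ψ, hφ, hψ⟩ := exists_good_pair hfib
      exact ⟨φ, ψ, fun _ => ⟨fun k hk => hφ k hk, fun m hm => hψ m hm⟩⟩
    · exact ⟨id, id, fun h => absurd h hinv⟩
  choose Φ Ψ hΦΨ using key
  -- base case: the empty node
  have hnil : [] ∈ T → ([] ∈ T' ∧ ρ' [] = ρ []) := by
    intro h0
    cases hr : ρ [] with
    | none =>
      obtain ⟨b, hb, hbl, hbn⟩ := (hinf 0).1 ⟨[], h0, rfl, hr⟩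
      obtain rfl : b = [] := List.length_eq_zero_iff.1 hbl
      exact ⟨hb, hbn⟩
    | some α =>
      have hmem : α ∈ {α : Ordinal | ∃ a ∈ T, a.length = 0 ∧ ρ a = some α} :=
        ⟨[], h0, rfl, hr⟩
      rw [hranks 0] at hmem
      obtain ⟨b, hb, hbl, hbα⟩ := hmem
      obtain rfl : b = [] := List.length_eq_zero_iff.1 hbl
      exact ⟨hb, hbα⟩
  have hnil' : [] ∈ T' → ([] ∈ T ∧ ρ [] = ρ' []) := by
    intro h0
    cases hr : ρ' [] with
    | none =>
      obtain ⟨b, hb, hbl, hbn⟩ := (hinf 0).2 ⟨[], h0, rfl, hr⟩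
      obtain rfl : b = [] := List.length_eq_zero_iff.1 hbl
      exact ⟨hb, hbn⟩
    | some α =>
      have hmem : α ∈ {α : Ordinal | ∃ a ∈ T', a.length = 0 ∧ ρ' a = some α} :=
        ⟨[], h0, rfl, hr⟩
      rw [← hranks 0] at hmem
      obtain ⟨b, hb, hbl, hbα⟩ := hmem
      obtain rfl : b = [] := List.length_eq_zero_iff.1 hbl
      exact ⟨hb, hbα⟩
  -- the forward and backward maps
  set Fm : List ℕ → List ℕ := extMap Φ with hFm
  set Gm : List ℕ → List ℕ := extMap (fun b c m => Ψ c b m) with hGm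
  have hFapp : ∀ (a : List ℕ) (k : ℕ), Fm (a ++ [k]) = Fm a ++ [Φ a (Fm a) k] :=
    fun a k => extMap_append Φ a k
  have hGapp : ∀ (b : List ℕ) (m : ℕ), Gm (b ++ [m]) = Gm b ++ [Ψ (Gm b) b m] :=
    fun b m => extMap_append (fun b c m => Ψ c b m) b m
  have inv1 : ∀ a : List ℕ, a ∈ T →
      Fm a ∈ T' ∧ (Fm a).length = a.length ∧ ρ' (Fm a) = ρ a ∧ Gm (Fm a) = a := by
    intro a
    induction a using List.reverseRecOn with
    | nil =>
      intro h0
      obtain ⟨h0', hr⟩ := hnil h0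
      exact ⟨h0', rfl, hr, rfl⟩
    | append_singleton a k ih =>
      intro hak
      have ha : a ∈ T := hT _ hak a ⟨[k], rfl⟩
      obtain ⟨h1, h2, h3, h4⟩ := ih ha
      have hg := hΦΨ a (Fm a) ⟨ha, h1, h2, h3.symm⟩
      obtain ⟨m1, m2, m3⟩ := hg.1 k hak
      refine ⟨by rw [hFapp]; exact m1, by rw [hFapp]; simp [h2],
        by rw [hFapp, m2], ?_⟩
      rw [hFapp, hGapp, h4, m3]
  have inv2 : ∀ b : List ℕ, b ∈ T' →
      Gm b ∈ T ∧ ρ (Gm b) = ρ' b ∧ Fm (Gm b) = b := by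
    intro b
    induction b using List.reverseRecOn with
    | nil =>
      intro h0
      obtain ⟨h0', hr⟩ := hnil' h0
      exact ⟨h0', hr, rfl⟩
    | append_singleton b m ih =>
      intro hbm
      have hb : b ∈ T' := hT' _ hbm b ⟨[m], rfl⟩
      obtain ⟨g1, g2, g3⟩ := ih hb
      have hlen : b.length = (Gm b).length := by
        have := (inv1 (Gm b) g1).2.1
        rw [g3] at this
        exact this
      have hg := hΦΨ (Gm b) b ⟨g1, hb, hlen, g2⟩
      obtain ⟨n1, n2⟩ := hg.2 m hbm
      obtain ⟨p1, p2, p3⟩ := hg.1 (Ψ (Gm b) b m) n1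
      refine ⟨by rw [hGapp]; exact n1, ?_, ?_⟩
      · rw [hGapp]
        rw [n2] at p2
        exact p2.symm
      · rw [hGapp, hFapp, g3, n2]
  refine ⟨Fm, ⟨fun a ha => (inv1 a ha).1, ?_, ?_⟩,
    fun a ha => (inv1 a ha).2.1, fun a _ k _ => ⟨Φ a (Fm a) k, hFapp a k⟩⟩
  · intro a1 h1 a2 h2 he
    have e1 := (inv1 a1 h1).2.2.2
    have e2 := (inv1 a2 h2).2.2.2
    rw [← e1, ← e2, he]
  · intro b hb
    obtain ⟨g1, _, g3⟩ := inv2 b hb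
    exact ⟨Gm b, g1, g3⟩
end

section
/- There exists a family of 2^{ℵ₀} pairwise bi-immune subsets of ω, where sets A and B are bi-immune if for every partial computable function f: if the range of f restricted to A is infinite then it is not contained in B, and if the range of f restricted to B is infinite then it is not contained in A. -/
/-- The range of a partial function `f` restricted to `A`. -/
def ranRestrict (f : ℕ →. ℕ) (A : Set ℕ) : Set ℕ :=
  {y : ℕ | ∃ a ∈ A, y ∈ f a}

/-- `A` and `B` are bi-immune: for every partial computable `f`, if
`ran(f↾A)` is infinite then it is not contained in `B`, and if `ran(f↾B)` is
infinite then it is not contained in `A`. -/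
def BiImmune (A B : Set ℕ) : Prop :=
  ∀ f : ℕ →. ℕ, Nat.Partrec f →
    ((ranRestrict f A).Infinite → ¬ ranRestrict f A ⊆ B) ∧
    ((ranRestrict f B).Infinite → ¬ ranRestrict f B ⊆ A)

namespace BIP

open scoped Classical

open Nat.Partrec (Code)

/-- Pick an element of a set of naturals (junk if empty). -/
noncomputable def pick (S : Set ℕ) : ℕ := if h : S.Nonempty then h.choose else 0

lemma pick_mem {S : Set ℕ} (h : S.Nonempty) : pick S ∈ S := by
  rw [pick, dif_pos h]; exact h.choose_spec

/-- A state assigns to each binary string a committed finite set and a reservoir. -/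
abbrev St := (List Bool → Finset ℕ) × (List Bool → Set ℕ)

/-- All reservoirs infinite. -/
def Inv (st : St) : Prop := ∀ σ, (st.2 σ).Infinite

/-- Extension order: committed sets grow, committed ∪ reservoir shrinks. -/
def StLE (st st' : St) : Prop :=
  ∀ σ, st.1 σ ⊆ st'.1 σ ∧ (↑(st'.1 σ) ∪ st'.2 σ : Set ℕ) ⊆ ↑(st.1 σ) ∪ st.2 σ

lemma StLE.rfl {st : St} : StLE st st := fun _ => ⟨subset_rfl, subset_rfl⟩

lemma StLE.trans {s1 s2 s3 : St} (h : StLE s1 s2) (h' : StLE s2 s3) : StLE s1 s3 :=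
  fun σ => ⟨(h σ).1.trans (h' σ).1, (h' σ).2.trans (h σ).2⟩

/-- The condition for acting on requirement `(e, σ, τ)`. -/
def Cond (t : ℕ × List Bool × List Bool) (st : St) : Prop :=
  ∃ p : ℕ × ℕ, (p.1 ∈ st.1 t.2.1 ∨ p.1 ∈ st.2 t.2.1) ∧
    p.2 ∈ (Denumerable.ofNat Code t.1).eval p.1 ∧ p.2 ∉ st.1 t.2.2

/-- Act on requirement `t = (e, σ, τ)`: if some `m` available on the `σ` side has an
`f_e`-value `y` outside the committed `τ` side, commit `m` to `σ` and remove `y`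
from the `τ` reservoir. -/
noncomputable def act (t : ℕ × List Bool × List Bool) (st : St) : St :=
  if h : Cond t st then
    (Function.update st.1 t.2.1 (insert h.choose.1 (st.1 t.2.1)),
     Function.update st.2 t.2.2 (st.2 t.2.2 \ {h.choose.2}))
  else st

lemma act_le (t : ℕ × List Bool × List Bool) (st : St) : StLE st (act t st) := by
  rw [act]
  split
  · next h =>
    intro σ
    constructor
    · simp only [Function.update_apply]
      split
      · next heq => subst heq; exact Finset.subset_insert _ _
      · exact subset_rfl
    · intro n hn
      simp only [Function.update_apply] at hn
      rcases hn with hn | hn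
      · by_cases hσ : σ = t.2.1
        · subst hσ
          simp only [if_pos rfl] at hn
          rcases Finset.mem_insert.mp (Finset.mem_coe.mp hn) with rfl | hn
          · rcases h.choose_spec.1 with h1 | h1
            · exact Or.inl (Finset.mem_coe.mpr h1)
            · exact Or.inr h1
          · exact Or.inl (Finset.mem_coe.mpr hn)
        · simp only [if_neg hσ] at hn
          exact Or.inl hn
      · by_cases hτ : σ = t.2.2
        · simp only [if_pos hτ] at hn
          subst hτ
          exact Or.inr hn.1
        · simp only [if_neg hτ] at hn
          exact Or.inr hn
  · exact StLE.rfl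

lemma act_inv {st : St} (h : Inv st) (t : ℕ × List Bool × List Bool) : Inv (act t st) := by
  rw [act]
  split
  · intro σ
    simp only [Function.update_apply]
    split
    · next heq => exact (h _).diff (Set.finite_singleton _)
    · exact h σ
  · exact h

noncomputable def actF : St → (ℕ × List Bool × List Bool) → St := fun st t => act t st

lemma foldl_le (L : List (ℕ × List Bool × List Bool)) (st : St) :
    StLE st (List.foldl actF st L) := by
  induction L generalizing st with
  | nil => exact StLE.rfl
  | cons t L ih => exact (act_le t st).trans (ih (act t st))

lemma foldl_inv {st : St} (h : Inv st) (L : List (ℕ × List Bool × List Bool)) :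
    Inv (List.foldl actF st L) := by
  induction L generalizing st with
  | nil => exact h
  | cons t L ih => exact ih (act_inv h t)

/-- Split each node into two children, separating them by a fresh reservoir element. -/
noncomputable def splitSt (st : St) : St :=
  (fun σ => if σ.getLast? = some false then
      insert (pick (st.2 σ.dropLast \ ↑(st.1 σ.dropLast))) (st.1 σ.dropLast)
    else st.1 σ.dropLast,
   fun σ => st.2 σ.dropLast \ {pick (st.2 σ.dropLast \ ↑(st.1 σ.dropLast))})

lemma splitSt_inv {st : St} (h : Inv st) : Inv (splitSt st) :=
  fun σ => (h _).diff (Set.finite_singleton _)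

lemma splitSt_child_le {st : St} (h : Inv st) (σ : List Bool) (b : Bool) :
    st.1 σ ⊆ (splitSt st).1 (σ ++ [b]) ∧
    (↑((splitSt st).1 (σ ++ [b])) ∪ (splitSt st).2 (σ ++ [b]) : Set ℕ) ⊆
      ↑(st.1 σ) ∪ st.2 σ := by
  have hne : (st.2 σ \ ↑(st.1 σ)).Nonempty :=
    ((h σ).diff (Finset.finite_toSet _)).nonempty
  have hn := pick_mem hne
  simp only [splitSt, List.dropLast_concat, List.getLast?_concat]
  cases b
  · simp only [if_pos rfl]
    refine ⟨Finset.subset_insert _ _, ?_⟩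
    intro z hz
    rcases hz with hz | hz
    · rcases Finset.mem_insert.mp (Finset.mem_coe.mp hz) with rfl | hz
      · exact Or.inr hn.1
      · exact Or.inl (Finset.mem_coe.mpr hz)
    · exact Or.inr hz.1
  · simp only [reduceCtorEq, Option.some.injEq, Bool.true_eq_false, if_false]
    refine ⟨subset_rfl, ?_⟩
    intro z hz
    rcases hz with hz | hz
    · exact Or.inl hz
    · exact Or.inr hz.1

/-- All binary strings of a given length. -/
def allStrings : ℕ → List (List Bool)
  | 0 => [[]]
  | s+1 => (allStrings s).flatMap fun σ => [σ ++ [false], σ ++ [true]]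

lemma mem_allStrings : ∀ σ : List Bool, σ ∈ allStrings σ.length := by
  intro σ
  induction σ using List.reverseRecOn with
  | nil => simp [allStrings]
  | append_singleton l b ih =>
    simp only [List.length_append, List.length_singleton, allStrings, List.mem_flatMap]
    exact ⟨l, ih, by cases b <;> simp⟩

/-- The requirements handled at stage `s`. -/
def triples (s : ℕ) : List (ℕ × List Bool × List Bool) :=
  (List.range s).flatMap fun e =>
    (allStrings s).flatMap fun σ => (allStrings s).map fun τ => (e, σ, τ)

lemma mem_triples {s e : ℕ} {σ τ : List Bool} (he : e < s)
    (hσ : σ.length = s) (hτ : τ.length = s) : (e, σ, τ) ∈ triples s := by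
  simp only [triples, List.mem_flatMap, List.mem_range, List.mem_map]
  exact ⟨e, he, σ, hσ ▸ mem_allStrings σ, τ, hτ ▸ mem_allStrings τ, rfl⟩

/-- The construction. -/
noncomputable def stage : ℕ → St
  | 0 => (fun _ => ∅, fun _ => Set.univ)
  | s+1 => splitSt (List.foldl actF (stage s) (triples s))

lemma stage_succ (s : ℕ) :
    stage (s+1) = splitSt (List.foldl actF (stage s) (triples s)) := rfl

lemma stage_inv : ∀ s, Inv (stage s)
  | 0 => fun _ => Set.infinite_univ
  | s+1 => splitSt_inv (foldl_inv (stage_inv s) (triples s))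

/-- The length-`s` prefix of a branch. -/
def pre (x : ℕ → Bool) (s : ℕ) : List Bool := (List.range s).map x

lemma pre_succ (x : ℕ → Bool) (s : ℕ) : pre x (s+1) = pre x s ++ [x s] := by
  simp [pre, List.range_succ]

lemma length_pre (x : ℕ → Bool) (s : ℕ) : (pre x s).length = s := by simp [pre]

lemma pre_eq {x y : ℕ → Bool} {k : ℕ} (h : ∀ i < k, x i = y i) : pre x k = pre y k :=
  List.map_congr_left fun i hi => h i (List.mem_range.mp hi)

lemma pre_point {x y : ℕ → Bool} {s i : ℕ} (h : pre x s = pre y s) (hi : i < s) :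
    x i = y i := by
  have hl : i < (pre x s).length := by rwa [length_pre]
  have := List.getElem_of_eq h hl
  simpa [pre] using this

/-- The branch set. -/
noncomputable def branchSet (x : ℕ → Bool) : Set ℕ := ⋃ s, ↑((stage s).1 (pre x s))

lemma branch_lower (x : ℕ → Bool) (s : ℕ) :
    (↑((stage s).1 (pre x s)) : Set ℕ) ⊆ branchSet x :=
  Set.subset_iUnion (fun s => (↑((stage s).1 (pre x s)) : Set ℕ)) s

/-- One-step monotonicity along a branch. -/
lemma stage_step (x : ℕ → Bool) (s : ℕ) :
    (stage s).1 (pre x s) ⊆ (stage (s+1)).1 (pre x (s+1)) ∧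
    (↑((stage (s+1)).1 (pre x (s+1))) ∪ (stage (s+1)).2 (pre x (s+1)) : Set ℕ) ⊆
      ↑((stage s).1 (pre x s)) ∪ (stage s).2 (pre x s) := by
  have hle := foldl_le (triples s) (stage s)
  have hchild := splitSt_child_le (foldl_inv (stage_inv s) (triples s)) (pre x s) (x s)
  rw [stage_succ, pre_succ]
  exact ⟨(hle _).1.trans hchild.1, hchild.2.trans (hle _).2⟩

lemma stage_mono (x : ℕ → Bool) {s s' : ℕ} (h : s ≤ s') :
    (stage s).1 (pre x s) ⊆ (stage s').1 (pre x s') ∧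
    (↑((stage s').1 (pre x s')) ∪ (stage s').2 (pre x s') : Set ℕ) ⊆
      ↑((stage s).1 (pre x s)) ∪ (stage s).2 (pre x s) := by
  induction s', h using Nat.le_induction with
  | base => exact ⟨subset_rfl, subset_rfl⟩
  | succ s' hs ih =>
    exact ⟨ih.1.trans (stage_step x s').1, (stage_step x s').2.trans ih.2⟩

lemma branch_upper (x : ℕ → Bool) (s : ℕ) :
    branchSet x ⊆ ↑((stage s).1 (pre x s)) ∪ (stage s).2 (pre x s) := by
  refine Set.iUnion_subset fun s' => ?_
  rcases le_total s' s with h | h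
  · exact (Finset.coe_subset.mpr (stage_mono x h).1).trans Set.subset_union_left
  · exact Set.subset_union_left.trans (stage_mono x h).2



/-- Bounds on the branch sets seen from a mid-stage state. -/
lemma mid_bounds (x : ℕ → Bool) {s : ℕ} {L1 L2 : List (ℕ × List Bool × List Bool)}
    {t : ℕ × List Bool × List Bool} (hL : triples s = L1 ++ t :: L2) :
    (↑((act t (List.foldl actF (stage s) L1)).1 (pre x s)) : Set ℕ) ⊆ branchSet x ∧
    branchSet x ⊆ ↑((act t (List.foldl actF (stage s) L1)).1 (pre x s)) ∪
      (act t (List.foldl actF (stage s) L1)).2 (pre x s) := by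
  set st' := act t (List.foldl actF (stage s) L1) with hst'
  have h2 : stage (s+1) = splitSt (List.foldl actF st' L2) := by
    rw [stage_succ, hL, List.foldl_append, List.foldl_cons]
    rfl
  have hinv' : Inv st' := act_inv (foldl_inv (stage_inv s) L1) t
  have hinvw : Inv (List.foldl actF st' L2) := foldl_inv hinv' L2
  have hle : StLE st' (List.foldl actF st' L2) := foldl_le L2 st'
  have hchild := splitSt_child_le hinvw (pre x s) (x s)
  constructor
  · intro n hn
    have hmem : n ∈ (stage (s+1)).1 (pre x (s+1)) := by
      rw [h2, pre_succ]
      exact hchild.1 ((hle _).1 hn)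
    exact branch_lower x (s+1) hmem
  · intro n hn
    have h3 := branch_upper x (s+1) hn
    rw [h2, pre_succ] at h3
    exact (hle _).2 (hchild.2 h3)

/-- The key diagonalization lemma: for any code `c` handled at a stage `s` where the
branches `x` and `y` have already split, either `ran(f_c ↾ A_x)` is finite, or it has
an element outside `A_y`. -/
lemma crux {x y : ℕ → Bool} (c : Code) {s : ℕ} (hcs : Encodable.encode c < s)
    (hpre : pre x s ≠ pre y s) :
    ¬ (ranRestrict c.eval (branchSet x)).Infinite ∨
      ∃ z ∈ ranRestrict c.eval (branchSet x), z ∉ branchSet y := by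
  have ht : (Encodable.encode c, pre x s, pre y s) ∈ triples s :=
    mem_triples hcs (length_pre x s) (length_pre y s)
  obtain ⟨L1, L2, hL⟩ := List.append_of_mem ht
  set t : ℕ × List Bool × List Bool := (Encodable.encode c, pre x s, pre y s) with htdef
  set st0 := List.foldl actF (stage s) L1 with hst0
  have hbx := mid_bounds x hL
  have hby := mid_bounds y hL
  have hofNat : (Denumerable.ofNat Code t.1).eval = c.eval := by
    simp [htdef, Denumerable.ofNat_encode]
  by_cases h : Cond t st0
  · -- we acted: we get a witness z in ran(f↾A_x) excluded from A_y.
    right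
    have hact : act t st0 = (Function.update st0.1 t.2.1 (insert h.choose.1 (st0.1 t.2.1)),
        Function.update st0.2 t.2.2 (st0.2 t.2.2 \ {h.choose.2})) := by
      rw [act, dif_pos h]
    obtain ⟨hm, hy, hyτ⟩ := h.choose_spec
    refine ⟨h.choose.2, ⟨h.choose.1, ?_, ?_⟩, ?_⟩
    · -- h.choose.1 ∈ branchSet x
      apply hbx.1
      rw [hact]
      simp only [Function.update_apply, htdef, if_pos rfl]
      exact Finset.mem_coe.mpr (Finset.mem_insert_self _ _)
    · -- value membership
      rw [← hofNat]; exact hy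
    · -- h.choose.2 ∉ branchSet y
      intro hmem
      have := hby.2 hmem
      rw [hact] at this
      rcases this with hthis | hthis
      · apply hyτ
        simp only [Function.update_apply] at hthis
        rw [if_neg] at hthis
        · exact Finset.mem_coe.mp hthis
        · exact fun hh => hpre (hh.symm)
      · simp only [Function.update_apply] at hthis
        rw [if_pos (by rw [htdef])] at hthis
        exact hthis.2 rfl
  · -- no action possible: ran(f↾A_x) is contained in the finite set st0.1 (pre y s).
    left
    have hid : act t st0 = st0 := by rw [act, dif_neg h]
    rw [Set.not_infinite]
    refine Set.Finite.subset (Finset.finite_toSet (st0.1 (pre y s))) ?_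
    rintro z ⟨a, haA, hz⟩
    have haS : a ∈ (↑(st0.1 (pre x s)) : Set ℕ) ∪ st0.2 (pre x s) := by
      have := hbx.2 haA
      rwa [hid] at this
    by_contra hzτ
    exact h ⟨(a, z), by
      rcases haS with h1 | h1
      · exact Or.inl (Finset.mem_coe.mp h1)
      · exact Or.inr h1, by rw [hofNat]; exact hz, hzτ⟩


/-- Distinct branches give distinct sets: the splitting element separates them. -/
lemma branch_ne {x y : ℕ → Bool} {k : ℕ} (hpre : pre x k = pre y k)
    (hx : x k = false) (hy : y k = true) : branchSet x ≠ branchSet y := by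
  set w := List.foldl actF (stage k) (triples k) with hw
  set σ := pre x k with hσ
  set n := pick (w.2 σ \ ↑(w.1 σ)) with hn
  have hinvw : Inv w := foldl_inv (stage_inv k) (triples k)
  have hne : (w.2 σ \ ↑(w.1 σ)).Nonempty := ((hinvw σ).diff (Finset.finite_toSet _)).nonempty
  have hmem := pick_mem hne
  have hnx : n ∈ branchSet x := by
    apply branch_lower x (k+1)
    rw [stage_succ, pre_succ, hx, ← hw]
    simp only [splitSt, List.dropLast_concat, List.getLast?_concat, if_pos rfl, ← hσ, ← hn]
    exact Finset.mem_insert_self _ _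
  have hny : n ∉ branchSet y := by
    intro hmemy
    have := branch_upper y (k+1) hmemy
    rw [stage_succ, pre_succ, hy, ← hw] at this
    simp only [splitSt, List.dropLast_concat, List.getLast?_concat,
      reduceCtorEq, Option.some.injEq, Bool.true_eq_false, if_false, ← hpre, ← hσ, ← hn] at this
    rcases this with h1 | h1
    · exact hmem.2 h1
    · exact h1.2 rfl
  intro hEq
  rw [hEq] at hnx
  exact hny hnx

lemma branch_injective : Function.Injective branchSet := by
  intro x y hEq
  by_contra hne
  obtain ⟨k, hk⟩ := Function.ne_iff.mp hne
  -- take the least point of difference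
  have hP : ∃ k, x k ≠ y k := ⟨k, hk⟩
  set k0 := Nat.find hP with hk0
  have hk0spec : x k0 ≠ y k0 := Nat.find_spec hP
  have hpre : pre x k0 = pre y k0 :=
    pre_eq fun i hi => by
      by_contra hne'
      exact absurd hi (not_lt.mpr (Nat.find_le hne'))
  rcases Bool.eq_false_or_eq_true (x k0) with hx | hx <;>
    rcases Bool.eq_false_or_eq_true (y k0) with hy | hy
  · exact hk0spec (hx.trans hy.symm)
  · exact branch_ne hpre.symm hy hx hEq.symm
  · exact branch_ne hpre hx hy hEq
  · exact hk0spec (hx.trans hy.symm)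

/-- Any two distinct branch sets are bi-immune. -/
lemma branch_biImmune {x y : ℕ → Bool} (hxy : x ≠ y) :
    BiImmune (branchSet x) (branchSet y) := by
  intro f hf
  obtain ⟨c, rfl⟩ := Nat.Partrec.Code.exists_code.mp hf
  obtain ⟨k, hk⟩ := Function.ne_iff.mp hxy
  set s := max (Encodable.encode c + 1) (k + 1) with hs
  have hcs : Encodable.encode c < s := lt_of_lt_of_le (Nat.lt_succ_self _) (le_max_left _ _)
  have hks : k < s := lt_of_lt_of_le (Nat.lt_succ_self _) (le_max_right _ _)
  have hpre : pre x s ≠ pre y s := fun h => hk (pre_point h hks)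
  constructor
  · intro hinf
    rcases crux c hcs hpre with h | ⟨z, hz1, hz2⟩
    · exact absurd hinf h
    · exact fun hsub => hz2 (hsub hz1)
  · intro hinf
    rcases crux c hcs (fun h => hpre h.symm) with h | ⟨z, hz1, hz2⟩
    · exact absurd hinf h
    · exact fun hsub => hz2 (hsub hz1)

end BIP

/-- There is a family of `2^{ℵ₀}` pairwise bi-immune subsets of `ω`. -/
theorem exists_continuum_pairwise_biImmune :
    ∃ 𝒜 : Set (Set ℕ), Cardinal.mk 𝒜 = Cardinal.continuum ∧
      ∀ A ∈ 𝒜, ∀ B ∈ 𝒜, A ≠ B → BiImmune A B := by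
  refine ⟨Set.range BIP.branchSet, ?_, ?_⟩
  · rw [Cardinal.mk_range_eq _ BIP.branch_injective]
    rw [Cardinal.mk_arrow]
    simp [Cardinal.two_power_aleph0]
  · rintro A ⟨x, rfl⟩ B ⟨y, rfl⟩ hAB
    exact BIP.branch_biImmune fun h => hAB (by rw [h])
end

section
/- There is a computable linear ordering that is not a well-ordering but has no hyperarithmetical infinite descending sequence; namely, the Kleene–Brouwer ordering of a computable tree T ⊆ ω^{<ω} that has a path but no hyperarithmetical path. -/
/-- The Kleene–Brouwer ordering on finite sequences: `σ < τ` iff `σ` properly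
extends `τ`, or at the first place where they differ, `σ` has the smaller
value. -/
def KB (σ τ : List ℕ) : Prop :=
  (τ <+: σ ∧ σ ≠ τ) ∨
    ∃ n : ℕ, σ.take n = τ.take n ∧
      ∃ hs : n < σ.length, ∃ ht : n < τ.length, σ.get ⟨n, hs⟩ < τ.get ⟨n, ht⟩

/-- `f` is a path through the tree `T`. -/
def IsPath (T : Set (List ℕ)) (f : ℕ → ℕ) : Prop :=
  ∀ n : ℕ, List.ofFn (fun i : Fin n => f i) ∈ T

/-- value of a list at position `n`, with `⊤` beyond the end. -/
noncomputable def gv (σ : List ℕ) (n : ℕ) : WithTop ℕ :=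
  if h : n < σ.length then (σ.get ⟨n, h⟩ : WithTop ℕ) else ⊤

lemma gv_lt_top {σ : List ℕ} {n : ℕ} (h : gv σ n < ⊤) : n < σ.length := by
  by_contra hn
  simp [gv, hn] at h

lemma gv_of_lt {σ : List ℕ} {n : ℕ} (h : n < σ.length) :
    gv σ n = (σ.get ⟨n, h⟩ : WithTop ℕ) := by simp [gv, h]

lemma gv_eq_top {σ : List ℕ} {n : ℕ} (h : σ.length ≤ n) : gv σ n = ⊤ := by
  simp [gv, Nat.not_lt.2 h]

lemma take_eq_of_gv {σ τ : List ℕ} {n : ℕ}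
    (h : ∀ m < n, gv σ m = gv τ m) : σ.take n = τ.take n := by
  apply List.ext_getElem?
  intro m
  rcases lt_or_ge m n with hm | hm
  · have := h m hm
    rcases lt_or_ge m σ.length with h1 | h1
    · rcases lt_or_ge m τ.length with h2 | h2
      · rw [gv_of_lt h1, gv_of_lt h2] at this
        have : σ.get ⟨m, h1⟩ = τ.get ⟨m, h2⟩ := by exact_mod_cast this
        rw [List.getElem?_take_of_lt hm, List.getElem?_take_of_lt hm, List.getElem?_eq_getElem h1,
          List.getElem?_eq_getElem h2]
        simp only [List.get_eq_getElem] at this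
        rw [this]
      · rw [gv_of_lt h1, gv_eq_top h2] at this
        exact absurd this (by simp)
    · rcases lt_or_ge m τ.length with h2 | h2
      · rw [gv_eq_top h1, gv_of_lt h2] at this
        exact absurd this.symm (by simp)
      · rw [List.getElem?_eq_none (by simpa using Or.inr h1),
          List.getElem?_eq_none (by simpa using Or.inr h2)]
  · rw [List.getElem?_eq_none (by simp [hm]), List.getElem?_eq_none (by simp [hm])]

lemma gv_eq_of_take {σ τ : List ℕ} {n : ℕ} (h : σ.take n = τ.take n)
    {m : ℕ} (hm : m < n) : gv σ m = gv τ m := by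
  have hget : σ[m]? = τ[m]? := by
    rw [← List.getElem?_take_of_lt hm, ← List.getElem?_take_of_lt (l := τ) hm, h]
  unfold gv
  rcases lt_or_ge m σ.length with h1 | h1
  · rcases lt_or_ge m τ.length with h2 | h2
    · simp only [h1, h2, dif_pos]
      rw [List.getElem?_eq_getElem h1, List.getElem?_eq_getElem h2] at hget
      have : σ.get ⟨m, h1⟩ = τ.get ⟨m, h2⟩ := Option.some_injective _ hget
      rw [this]
    · rw [List.getElem?_eq_getElem h1, List.getElem?_eq_none (by simpa using h2)] at hget
      simp at hget
  · rcases lt_or_ge m τ.length with h2 | h2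
    · rw [List.getElem?_eq_none (by simpa using h1), List.getElem?_eq_getElem h2] at hget
      simp at hget
    · simp [Nat.not_lt.2 h1, Nat.not_lt.2 h2]

lemma KB_iff (σ τ : List ℕ) :
    KB σ τ ↔ ∃ n, (∀ m < n, gv σ m = gv τ m) ∧ gv σ n < gv τ n := by
  constructor
  · rintro (⟨⟨u, hu⟩, hne⟩ | ⟨n, htake, hs, ht, hlt⟩)
    · -- τ <+: σ, σ ≠ τ
      have hlen : τ.length < σ.length := by
        rcases lt_or_eq_of_le (List.IsPrefix.length_le ⟨u, hu⟩) with h | h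
        · exact h
        · exact absurd (List.IsPrefix.eq_of_length ⟨u, hu⟩ h).symm hne
      refine ⟨τ.length, fun m hm => gv_eq_of_take ?_ hm, ?_⟩
      · rw [List.take_length]
        exact (List.prefix_iff_eq_take.1 ⟨u, hu⟩).symm
      · rw [gv_eq_top (le_refl _), gv_of_lt hlen]
        exact lt_of_le_of_ne le_top (by simp)
    · exact ⟨n, fun m hm => gv_eq_of_take htake hm,
        by rw [gv_of_lt hs, gv_of_lt ht]; exact_mod_cast hlt⟩
  · rintro ⟨n, hagree, hlt⟩
    have hs : n < σ.length := gv_lt_top (lt_of_lt_of_le hlt le_top)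
    rcases lt_or_ge n τ.length with ht | ht
    · right
      refine ⟨n, take_eq_of_gv hagree, hs, ht, ?_⟩
      rw [gv_of_lt hs, gv_of_lt ht] at hlt
      exact_mod_cast hlt
    · -- n ≥ τ.length; show n = τ.length and prefix
      have hn : n = τ.length := by
        rcases lt_or_eq_of_le ht with h | h
        · exfalso
          have := hagree τ.length h
          rw [gv_eq_top (le_refl _)] at this
          have : σ.length ≤ τ.length := by
            by_contra hc
            rw [gv_of_lt (Nat.lt_of_not_le hc)] at this
            simp at this
          exact absurd (lt_of_lt_of_le (lt_of_le_of_lt this h) (le_of_lt hs)) (lt_irrefl _)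
        · exact h.symm
      subst hn
      left
      have hpre : τ <+: σ := by
        rw [List.prefix_iff_eq_take]
        rw [take_eq_of_gv hagree]
        simp
      exact ⟨hpre, fun h => by subst h; exact absurd hs (lt_irrefl _)⟩

lemma KB_irrefl (σ : List ℕ) : ¬ KB σ σ := by
  rw [KB_iff]; rintro ⟨n, _, h⟩; exact absurd h (lt_irrefl _)

lemma KB_trans {σ τ υ : List ℕ} (h1 : KB σ τ) (h2 : KB τ υ) : KB σ υ := by
  rw [KB_iff] at *
  obtain ⟨n1, ha1, hl1⟩ := h1
  obtain ⟨n2, ha2, hl2⟩ := h2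
  rcases lt_trichotomy n1 n2 with h | h | h
  · exact ⟨n1, fun m hm => (ha1 m hm).trans (ha2 m (hm.trans h)), hl1.trans_eq (ha2 n1 h)⟩
  · subst h; exact ⟨n1, fun m hm => (ha1 m hm).trans (ha2 m hm), hl1.trans hl2⟩
  · exact ⟨n2, fun m hm => (ha1 m (hm.trans h)).trans (ha2 m hm), (ha1 n2 h).trans_lt hl2⟩

lemma KB_total {σ τ : List ℕ} (h : σ ≠ τ) : KB σ τ ∨ KB τ σ := by
  have hex : ∃ n, gv σ n ≠ gv τ n := by
    by_contra hc
    push_neg at hc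
    apply h
    apply List.ext_getElem?
    intro m
    have := hc m
    unfold gv at this
    rcases lt_or_ge m σ.length with h1 | h1 <;> rcases lt_or_ge m τ.length with h2 | h2
    · simp only [h1, h2, dif_pos] at this
      rw [List.getElem?_eq_getElem h1, List.getElem?_eq_getElem h2]
      exact_mod_cast congrArg some (by exact_mod_cast this)
    · simp [h1, Nat.not_lt.2 h2] at this
    · simp [Nat.not_lt.2 h1, h2] at this
    · rw [List.getElem?_eq_none (by simpa using h1), List.getElem?_eq_none (by simpa using h2)]
  classical
  let n := Nat.find hex
  have hne : gv σ n ≠ gv τ n := Nat.find_spec hex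
  have hagree : ∀ m < n, gv σ m = gv τ m := fun m hm => by
    by_contra hc; exact absurd hm (Nat.not_lt.2 (Nat.find_le hc))
  rcases lt_or_gt_of_ne hne with hlt | hlt
  · exact Or.inl ((KB_iff _ _).2 ⟨n, hagree, hlt⟩)
  · exact Or.inr ((KB_iff _ _).2 ⟨n, fun m hm => (hagree m hm).symm, hlt⟩)

lemma gv_take {σ : List ℕ} {k m : ℕ} (hm : m < k) : gv (σ.take k) m = gv σ m := by
  unfold gv
  rcases lt_or_ge m σ.length with h1 | h1
  · have h2 : m < (σ.take k).length := by simp [hm, h1]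
    simp only [h2, h1, dif_pos]
    congr 1
    simp [List.getElem_take]
  · have h2 : ¬ m < (σ.take k).length := by simp; omega
    simp [Nat.not_lt.2 h1, h2]

lemma KB_take {σ τ : List ℕ} (h : KB σ τ) (k : ℕ) :
    KB (σ.take k) (τ.take k) ∨ σ.take k = τ.take k := by
  rw [KB_iff] at h
  obtain ⟨n, hagree, hlt⟩ := h
  rcases lt_or_ge n k with hn | hn
  · left
    rw [KB_iff]
    refine ⟨n, fun m hm => ?_, ?_⟩
    · rw [gv_take (hm.trans hn), gv_take (hm.trans hn)]
      exact hagree m hm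
    · rw [gv_take hn, gv_take hn]
      exact hlt
  · right
    exact take_eq_of_gv fun m hm => hagree m (hm.trans_le hn)

/-- A nonincreasing sequence of naturals is eventually constant. -/
lemma nat_antitone_stab (a : ℕ → ℕ) (h : ∀ n, a (n + 1) ≤ a n) :
    ∃ N, ∀ n, N ≤ n → a n = a N := by
  have hmono : ∀ m n, m ≤ n → a n ≤ a m := by
    intro m n hmn
    induction n, hmn using Nat.le_induction with
    | base => rfl
    | succ n hmn ih => exact le_trans (h n) ih
  classical
  have hS : ∃ v, ∃ n, a n = v := ⟨a 0, 0, rfl⟩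
  obtain ⟨N, hN⟩ := Nat.find_spec hS
  refine ⟨N, fun n hn => ?_⟩
  have h1 : a n ≤ a N := hmono N n hn
  have h2 : Nat.find hS ≤ a n := Nat.find_min' hS ⟨n, rfl⟩
  omega

/-- Key stabilization: a KB-nonincreasing sequence of lists of length ≤ k is
eventually constant. -/
lemma KB_stab : ∀ k : ℕ, ∀ y : ℕ → List ℕ, (∀ n, (y n).length ≤ k) →
    (∀ n, KB (y (n + 1)) (y n) ∨ y (n + 1) = y n) →
    ∃ N L, ∀ n, N ≤ n → y n = L := by
  intro k
  induction k with
  | zero =>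
    intro y hlen _
    refine ⟨0, [], fun n _ => ?_⟩
    exact List.length_eq_zero_iff.1 (Nat.le_zero.1 (hlen n))
  | succ k ih =>
    intro y hlen hdesc
    obtain ⟨N, L, hNL⟩ := ih (fun n => (y n).take k) (fun n => by simp)
      (fun n => by
        rcases hdesc n with h | h
        · exact KB_take h k
        · exact Or.inr (congrArg (List.take k) h))
    -- after N, each y n is L or L ++ [a]
    have hform : ∀ n, N ≤ n → y n = L ∨ y n = L ++ [(y n).getD k 0] := by
      intro n hn
      rcases lt_or_ge (y n).length (k + 1) with h1 | h1
      · left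
        rw [← hNL n hn, List.take_of_length_le (Nat.lt_succ_iff.1 h1)]
      · right
        have hk : k < (y n).length := h1
        have e1 : (y n).take (k + 1) = y n := List.take_of_length_le (hlen n)
        have e2 : (y n).take k ++ [(y n)[k]] = (y n).take (k + 1) :=
          List.take_concat_get' (y n) k hk
        have hL : L.length = k := by rw [← hNL n hn]; simp [Nat.le_of_lt hk]
        rw [← e1, ← e2, hNL n hn]
        congr 2
        rw [List.getD_eq_getElem?_getD, List.getElem?_append_right (by omega)]
        simp [hL]
    -- not KB L (L ++ [a]) and KB (L++[b]) (L++[a]) → b < a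
    have hnotup : ∀ a : ℕ, ¬ KB L (L ++ [a]) := by
      intro a hkb
      rcases hkb with ⟨⟨u, hu⟩, hne⟩ | ⟨n, htake, hs, ht, hlt⟩
      · have := congrArg List.length hu
        simp at this
      · have hn : n < L.length := hs
        have : (L ++ [a]).get ⟨n, ht⟩ = L.get ⟨n, hn⟩ := by
          simp only [List.get_eq_getElem]
          exact List.getElem_append_left hn
        rw [this] at hlt
        exact absurd hlt (lt_irrefl _)
    have hstep : ∀ a b : ℕ, KB (L ++ [b]) (L ++ [a]) → b < a := by
      intro a b hkb
      rcases hkb with ⟨⟨u, hu⟩, hne⟩ | ⟨n, htake, hs, ht, hlt⟩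
      · have hl := congrArg List.length hu
        simp at hl
        rw [hl] at hu
        simp at hu
        exact absurd (by rw [hu]) hne
      · have hn : n < L.length + 1 := by simpa using hs
        rcases lt_or_ge n L.length with h1 | h1
        · have e1 : (L ++ [b]).get ⟨n, hs⟩ = L.get ⟨n, h1⟩ := by
            simp only [List.get_eq_getElem]
            exact List.getElem_append_left h1
          have e2 : (L ++ [a]).get ⟨n, ht⟩ = L.get ⟨n, h1⟩ := by
            simp only [List.get_eq_getElem]
            exact List.getElem_append_left h1
          rw [e1, e2] at hlt
          exact absurd hlt (lt_irrefl _)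
        · have hn' : n = L.length := by omega
          subst hn'
          have e1 : (L ++ [b]).get ⟨L.length, hs⟩ = b := by simp
          have e2 : (L ++ [a]).get ⟨L.length, ht⟩ = a := by simp
          rwa [e1, e2] at hlt
    by_cases hall : ∀ n, N ≤ n → y n = L
    · exact ⟨N, L, hall⟩
    · push_neg at hall
      obtain ⟨n0, hn0N, hn0⟩ := hall
      have hn0form : y n0 = L ++ [(y n0).getD k 0] := by
        rcases hform n0 hn0N with h | h
        · exact absurd h hn0
        · exact h
      -- from n0 on, y n = L ++ [a n] with a nonincreasing
      have hafter : ∀ m : ℕ, y (n0 + m) = L ++ [(y (n0 + m)).getD k 0] := by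
        intro m
        induction m with
        | zero => simpa using hn0form
        | succ m ihm =>
          rcases hform (n0 + (m+1)) (by omega) with h | h
          · exfalso
            rw [← Nat.add_assoc] at h
            rcases hdesc (n0 + m) with hd | hd
            · rw [h, ihm] at hd
              exact hnotup _ hd
            · rw [h, ihm] at hd
              have := congrArg List.length hd
              simp at this
          · exact h
      set a : ℕ → ℕ := fun m => (y (n0 + m)).getD k 0 with ha
      have hadesc : ∀ m, a (m + 1) ≤ a m := by
        intro m
        have hA := hafter (m + 1)
        rw [← Nat.add_assoc] at hA
        rcases hdesc (n0 + m) with hd | hd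
        · rw [hA, hafter m] at hd
          exact le_of_lt (hstep _ _ hd)
        · exact le_of_eq (congrArg (fun l => l.getD k 0) hd)
      obtain ⟨M, hM⟩ := nat_antitone_stab a hadesc
      refine ⟨n0 + M, L ++ [a M], fun n hn => ?_⟩
      have : n = n0 + (M + (n - n0 - M)) := by omega
      rw [this, hafter]
      congr 2
      have := hM (M + (n - n0 - M)) (by omega)
      simpa [ha] using this

lemma take_eq_map_range (l : List ℕ) (n : ℕ) :
    l.take n = (List.range (min n l.length)).map (fun i => l.getD i 0) := by
  apply List.ext_getElem
  · simp
  · intro i h1 h2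
    simp only [List.getElem_map, List.getElem_range]
    have hi : i < l.length := by simp at h1; omega
    rw [List.getElem_take]
    simp [List.getD_eq_getElem?_getD, List.getElem?_eq_getElem hi]

lemma take_primrec : Primrec₂ (fun (l : List ℕ) (n : ℕ) => l.take n) := by
  have h : Primrec (fun p : List ℕ × ℕ =>
      (List.range (min p.2 p.1.length)).map (fun i => p.1.getD i 0)) := by
    apply Primrec.list_map
    · exact Primrec.list_range.comp (Primrec₂.comp Primrec.nat_min Primrec.snd
        (Primrec.list_length.comp Primrec.fst))
    · exact ((Primrec.list_getD 0).comp (Primrec.fst.comp Primrec.fst) Primrec.snd).to₂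
  exact (h.of_eq fun p => (take_eq_map_range p.1 p.2).symm).to₂

lemma foldOr_primrec : Primrec (fun l : List Bool => l.foldr (· || ·) false) := by
  have h := Primrec.list_foldr (f := @id (List Bool)) (g := fun _ => false)
    (h := fun _ p => p.1 || p.2) Primrec.id (Primrec.const false)
    (((Primrec.dom_bool₂ (· || ·)).comp (Primrec.fst.comp Primrec.snd)
      (Primrec.snd.comp Primrec.snd)).to₂)
  exact h.of_eq fun l => rfl

lemma take_primrec' : Primrec₂ (fun (n : ℕ) (l : List ℕ) => l.take n) :=
  take_primrec.swap

lemma foldOr_true (l : List Bool) : l.foldr (· || ·) false = true ↔ ∃ b ∈ l, b = true := by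
  induction l with
  | nil => simp
  | cons a l ih => simp [ih, Bool.or_eq_true]

def kbFun (p : List ℕ × List ℕ) : Bool :=
  (decide (p.1.take p.2.length = p.2) && !decide (p.1 = p.2)) ||
  ((List.range (min p.1.length p.2.length)).map
      (fun n => decide (p.1.take n = p.2.take n) &&
        decide (p.1.getD n 0 < p.2.getD n 0))).foldr (· || ·) false

lemma kbFun_primrec : Primrec kbFun := by
  have h1 : Primrec (fun p : List ℕ × List ℕ => decide (p.1.take p.2.length = p.2)) :=
    Primrec₂.comp Primrec.eq.decide
      (Primrec₂.comp take_primrec' (Primrec.list_length.comp Primrec.snd) Primrec.fst)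
      Primrec.snd
  have h2 : Primrec (fun p : List ℕ × List ℕ => !decide (p.1 = p.2)) :=
    (Primrec.dom_bool Bool.not).comp (Primrec₂.comp Primrec.eq.decide Primrec.fst Primrec.snd)
  have hA := (Primrec.dom_bool₂ (· && ·)).comp h1 h2
  have hrange : Primrec (fun p : List ℕ × List ℕ =>
      List.range (min p.1.length p.2.length)) :=
    Primrec.list_range.comp (Primrec₂.comp Primrec.nat_min
      (Primrec.list_length.comp Primrec.fst) (Primrec.list_length.comp Primrec.snd))
  have hg1 : Primrec (fun q : (List ℕ × List ℕ) × ℕ =>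
      decide (q.1.1.take q.2 = q.1.2.take q.2)) :=
    Primrec₂.comp Primrec.eq.decide
      (Primrec₂.comp take_primrec' Primrec.snd (Primrec.fst.comp Primrec.fst))
      (Primrec₂.comp take_primrec' Primrec.snd (Primrec.snd.comp Primrec.fst))
  have hg2 : Primrec (fun q : (List ℕ × List ℕ) × ℕ =>
      decide (q.1.1.getD q.2 0 < q.1.2.getD q.2 0)) :=
    Primrec₂.comp Primrec.nat_lt.decide
      ((Primrec.list_getD 0).comp (Primrec.fst.comp Primrec.fst) Primrec.snd)
      ((Primrec.list_getD 0).comp (Primrec.snd.comp Primrec.fst) Primrec.snd)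
  have hg := (Primrec.dom_bool₂ (· && ·)).comp hg1 hg2
  have hmap := Primrec.list_map hrange hg.to₂
  have hB := foldOr_primrec.comp hmap
  exact (Primrec.dom_bool₂ (· || ·)).comp hA hB

lemma kb_iff_kbFun (σ τ : List ℕ) : KB σ τ ↔ kbFun (σ, τ) = true := by
  unfold kbFun KB
  simp only [Bool.or_eq_true, Bool.and_eq_true, decide_eq_true_eq, Bool.not_eq_true',
    decide_eq_false_iff_not, foldOr_true, List.mem_map, List.mem_range]
  constructor
  · rintro (⟨hpre, hne⟩ | ⟨n, htake, hs, ht, hlt⟩)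
    · exact Or.inl ⟨(List.prefix_iff_eq_take.1 hpre).symm, hne⟩
    · refine Or.inr ⟨true, ⟨n, lt_min hs ht, ?_⟩, rfl⟩
      rw [Bool.and_eq_true, decide_eq_true_eq, decide_eq_true_eq]
      refine ⟨htake, ?_⟩
      rw [List.getD_eq_getElem?_getD, List.getD_eq_getElem?_getD,
        List.getElem?_eq_getElem hs, List.getElem?_eq_getElem ht]
      simpa using hlt
  · rintro (⟨hpre, hne⟩ | ⟨b, ⟨n, hn, hfn⟩, rfl⟩)
    · exact Or.inl ⟨List.prefix_iff_eq_take.2 hpre.symm, hne⟩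
    · rw [Bool.and_eq_true, decide_eq_true_eq, decide_eq_true_eq] at hfn
      obtain ⟨htake, hlt⟩ := hfn
      have hs : n < σ.length := lt_of_lt_of_le hn (min_le_left _ _)
      have ht : n < τ.length := lt_of_lt_of_le hn (min_le_right _ _)
      refine Or.inr ⟨n, htake, hs, ht, ?_⟩
      rw [List.getD_eq_getElem?_getD, List.getD_eq_getElem?_getD,
        List.getElem?_eq_getElem hs, List.getElem?_eq_getElem ht] at hlt
      simpa using hlt

lemma KB_computable : ComputablePred (fun p : List ℕ × List ℕ => KB p.1 p.2) := by
  rw [ComputablePred.computable_iff]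
  refine ⟨kbFun, kbFun_primrec.to_comp, ?_⟩
  funext p
  exact propext (kb_iff_kbFun p.1 p.2)

lemma ofFn_snoc (f : ℕ → ℕ) (k : ℕ) :
    List.ofFn (fun i : Fin (k + 1) => f i) = List.ofFn (fun i : Fin k => f i) ++ [f k] := by
  rw [List.ofFn_succ']
  simp [List.concat_eq_append]

/-- There is a computable linear ordering that is not a well-ordering but has
no hyperarithmetical infinite descending sequence; namely, the Kleene–Brouwer
ordering of a computable tree `T ⊆ ω^{<ω}` that has a path but no
hyperarithmetical path.  Here `Hfun` is the class of hyperarithmetical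
functions `ω → ω` and `Hseq` the class of hyperarithmetical sequences of
nodes; the only property of "hyperarithmetical" that is used is that `Hfun`
contains every pointwise limit of a sequence in `Hseq`. -/
theorem kleeneBrouwer_no_hyp_descending
    (Hfun : Set (ℕ → ℕ)) (Hseq : Set (ℕ → List ℕ))
    (hlim : ∀ x ∈ Hseq, ∀ f : ℕ → ℕ,
      (∀ k : ℕ, ∃ N : ℕ, ∀ n : ℕ, N ≤ n →
        (x n).take k = List.ofFn (fun i : Fin k => f i)) → f ∈ Hfun)
    (T : Set (List ℕ)) (hT : IsTree T)
    (hTcomp : ComputablePred (· ∈ T))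
    (hpath : ∃ f : ℕ → ℕ, IsPath T f)
    (hnohyp : ∀ f ∈ Hfun, ¬ IsPath T f) :
    -- the KB ordering is a linear ordering on `T`:
    (∀ σ ∈ T, ¬ KB σ σ) ∧
    (∀ σ ∈ T, ∀ τ ∈ T, ∀ υ ∈ T, KB σ τ → KB τ υ → KB σ υ) ∧
    (∀ σ ∈ T, ∀ τ ∈ T, σ ≠ τ → KB σ τ ∨ KB τ σ) ∧
    -- it is computable:
    ComputablePred (fun p : List ℕ × List ℕ => KB p.1 p.2) ∧
    -- it is not a well-ordering:
    (∃ x : ℕ → List ℕ, (∀ n, x n ∈ T) ∧ ∀ n, KB (x (n + 1)) (x n)) ∧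
    -- but it has no hyperarithmetical infinite descending sequence:
    ∀ x ∈ Hseq, ¬ ((∀ n, x n ∈ T) ∧ ∀ n, KB (x (n + 1)) (x n)) := by
  refine ⟨fun σ _ => KB_irrefl σ, fun σ _ τ _ υ _ h1 h2 => KB_trans h1 h2,
    fun σ _ τ _ h => KB_total h, KB_computable, ?_, ?_⟩
  · -- a descending sequence along a path
    obtain ⟨f, hf⟩ := hpath
    refine ⟨fun n => List.ofFn (fun i : Fin n => f i), fun n => hf n, fun n => ?_⟩
    refine Or.inl ⟨⟨[f n], (ofFn_snoc f n).symm⟩, fun h => ?_⟩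
    have := congrArg List.length h
    simp at this
  · rintro x hx ⟨hmem, hdesc⟩
    have hstab : ∀ k, ∃ N L, ∀ n, N ≤ n → (x n).take k = L := fun k =>
      KB_stab k (fun n => (x n).take k) (fun n => by simp)
        (fun n => KB_take (hdesc n) k)
    choose N L hNL using hstab
    have hLlen : ∀ k, (L k).length = k := by
      intro k
      have h1 : (L k).length ≤ k := by
        rw [← hNL k (N k) (le_refl _)]; simp
      by_contra hc
      have hlt : (L k).length < k := lt_of_le_of_ne h1 hc
      have hconst : ∀ n, N k ≤ n → x n = L k := by
        intro n hn
        have hlen : (x n).length = (L k).length := by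
          have := congrArg List.length (hNL k n hn)
          simp at this
          omega
        rw [← hNL k n hn, List.take_of_length_le (by omega)]
      have hd := hdesc (N k)
      rw [hconst (N k + 1) (by omega), hconst (N k) (le_refl _)] at hd
      exact KB_irrefl _ hd
    set f : ℕ → ℕ := fun i => (L (i + 1)).getD i 0 with hfdef
    have hofn : ∀ k, L k = List.ofFn (fun i : Fin k => f i) := by
      intro k
      induction k with
      | zero =>
        have := hLlen 0
        simpa using List.length_eq_zero_iff.1 this
      | succ k ih =>
        have e1 : (x (max (N k) (N (k+1)))).take k = L k := hNL k _ (le_max_left _ _)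
        have e2 : (x (max (N k) (N (k+1)))).take (k+1) = L (k+1) := hNL (k+1) _ (le_max_right _ _)
        have e3 : (L (k+1)).take k = L k := by
          rw [← e2, List.take_take]
          rw [min_eq_left (by omega)]
          exact e1
        have hk : k < (L (k+1)).length := by rw [hLlen]; omega
        have e4 : (L (k+1)).take (k+1) = L (k+1) := List.take_of_length_le (by rw [hLlen])
        have e5 := List.take_concat_get' (L (k+1)) k hk
        have e6 : f k = (L (k + 1))[k] := by
          simp [hfdef, List.getD_eq_getElem?_getD, List.getElem?_eq_getElem hk]
        rw [ofFn_snoc, ← ih, ← e3, e6, e5, e4]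
    have hfH : f ∈ Hfun := hlim x hx f (fun k =>
      ⟨N k, fun n hn => by rw [hNL k n hn, hofn k]⟩)
    apply hnohyp f hfH
    intro k
    rw [← hofn k, ← hNL k (N k) (le_refl _)]
    exact hT (x (N k)) (hmem (N k)) _ (List.take_prefix _ _)
end

section
/- For the class K of ℚ-vector spaces with computable presentations: two computable ℚ-vector spaces are isomorphic if and only if for every n, one has n linearly independent elements iff the other does. Consequently the isomorphism relation for computable ℚ-vector spaces is Π⁰₃ (given that the index set is Π⁰₂ and the dimension-comparison condition is Π⁰₃). -/
/-- `V` has `n` linearly independent elements. -/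
def HasIndep (V : Type*) [AddCommGroup V] [Module ℚ V] (n : ℕ) : Prop :=
  ∃ f : Fin n → V, LinearIndependent ℚ f

lemma hasIndep_iff_rank (V : Type) [AddCommGroup V] [Module ℚ V] (n : ℕ) :
    HasIndep V n ↔ (n : Cardinal) ≤ Module.rank ℚ V := by
  rw [le_rank_iff_exists_linearIndependent]
  constructor
  · rintro ⟨f, hf⟩
    refine ⟨Set.range f, ?_, hf.linearIndepOn_id⟩
    rw [Cardinal.mk_range_eq f hf.injective, Cardinal.mk_fin]
  · rintro ⟨s, hcard, hs⟩
    obtain ⟨e⟩ := Cardinal.mk_eq_nat_iff.mp hcard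
    exact ⟨fun i => (e.symm i : V), hs.comp e.symm e.symm.injective⟩

lemma card_eq_of_nat_le_iff {c d : Cardinal} (hc : c ≤ Cardinal.aleph0)
    (hd : d ≤ Cardinal.aleph0) (h : ∀ n : ℕ, (n : Cardinal) ≤ c ↔ (n : Cardinal) ≤ d) :
    c = d := by
  have key : ∀ c d : Cardinal, c ≤ Cardinal.aleph0 →
      (∀ n : ℕ, (n : Cardinal) ≤ c → (n : Cardinal) ≤ d) → c ≤ d := by
    intro c d hc h
    by_contra hcd
    push_neg at hcd
    have hdfin : d < Cardinal.aleph0 := lt_of_lt_of_le hcd hc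
    obtain ⟨m, rfl⟩ := Cardinal.lt_aleph0.mp hdfin
    have h1 : ((m + 1 : ℕ) : Cardinal) ≤ c := by
      push_cast
      exact (Cardinal.add_one_le_succ _).trans (Order.succ_le_of_lt hcd)
    have := h (m + 1) h1
    exact absurd (Nat.cast_le.mp this) (by omega)
  exact le_antisymm (key c d hc fun n hn => (h n).1 hn)
    (key d c hd fun n hn => (h n).2 hn)

/-- Two countable `ℚ`-vector spaces are isomorphic iff for every `n`, one has
`n` linearly independent elements iff the other does.  Consequently, for a
(uniformly presented) family of countable `ℚ`-vector spaces in which the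
relation "`V_e` has `n` independent elements" is `Σ⁰₁` (witnessed by a
computable relation `R` with `HasIndep (V e) n ↔ ∃ s, R (e,n,s)`), the
isomorphism relation is `Π⁰₃`: it has a `∀∃∀` definition with computable
matrix. -/
theorem qVectorSpace_iso_iff_and_Pi03
    (V : ℕ → Type) [∀ e, AddCommGroup (V e)] [∀ e, Module ℚ (V e)]
    [∀ e, Countable (V e)]
    (R : ℕ × ℕ × ℕ → Bool) (hR : Computable R)
    (hInd : ∀ e n : ℕ, HasIndep (V e) n ↔ ∃ s : ℕ, R (e, n, s) = true) :
    (∀ a b : ℕ,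
      Nonempty (V a ≃ₗ[ℚ] V b) ↔ ∀ n : ℕ, (HasIndep (V a) n ↔ HasIndep (V b) n)) ∧
    (∃ S : ℕ × ℕ × ℕ × ℕ × ℕ → Bool, Computable S ∧
      ∀ a b : ℕ,
        Nonempty (V a ≃ₗ[ℚ] V b) ↔ ∀ n : ℕ, ∃ s : ℕ, ∀ t : ℕ,
          S (a, b, n, s, t) = true) := by
  have hrank : ∀ e, Module.rank ℚ (V e) ≤ Cardinal.aleph0 := fun e =>
    (rank_le_card ℚ (V e)).trans (Cardinal.mk_le_aleph0)
  have main : ∀ a b : ℕ,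
      Nonempty (V a ≃ₗ[ℚ] V b) ↔ ∀ n : ℕ, (HasIndep (V a) n ↔ HasIndep (V b) n) := by
    intro a b
    rw [LinearEquiv.nonempty_equiv_iff_rank_eq]
    constructor
    · intro h n
      rw [hasIndep_iff_rank, hasIndep_iff_rank, h]
    · intro h
      refine card_eq_of_nat_le_iff (hrank a) (hrank b) fun n => ?_
      rw [← hasIndep_iff_rank, ← hasIndep_iff_rank]
      exact h n
  refine ⟨main, ?_⟩
  -- the Π⁰₃ matrix
  refine ⟨fun x =>
    cond (cond (R (x.1, x.2.2.1.unpair)) (R (x.2.1, (x.2.2.1.unpair.1, x.2.2.2.1.unpair.1))) true)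
      (cond (R (x.2.1, x.2.2.1.unpair)) (R (x.1, (x.2.2.1.unpair.1, x.2.2.2.1.unpair.2))) true)
      false, ?_, ?_⟩
  · -- computability
    have hfst : Computable fun x : ℕ × ℕ × ℕ × ℕ × ℕ => x.1 := Computable.fst
    have hsnd1 : Computable fun x : ℕ × ℕ × ℕ × ℕ × ℕ => x.2.1 :=
      Computable.fst.comp Computable.snd
    have hn : Computable fun x : ℕ × ℕ × ℕ × ℕ × ℕ => x.2.2.1 :=
      Computable.fst.comp (Computable.snd.comp Computable.snd)
    have hs : Computable fun x : ℕ × ℕ × ℕ × ℕ × ℕ => x.2.2.2.1 :=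
      Computable.fst.comp (Computable.snd.comp (Computable.snd.comp Computable.snd))
    have hunpair : Computable Nat.unpair := Primrec.unpair.to_comp
    have hnu : Computable fun x : ℕ × ℕ × ℕ × ℕ × ℕ => x.2.2.1.unpair := hunpair.comp hn
    have hsu : Computable fun x : ℕ × ℕ × ℕ × ℕ × ℕ => x.2.2.2.1.unpair := hunpair.comp hs
    have hA1 : Computable fun x : ℕ × ℕ × ℕ × ℕ × ℕ => R (x.1, x.2.2.1.unpair) :=
      hR.comp (hfst.pair hnu)
    have hB1 : Computable fun x : ℕ × ℕ × ℕ × ℕ × ℕ =>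
        R (x.2.1, (x.2.2.1.unpair.1, x.2.2.2.1.unpair.1)) :=
      hR.comp (hsnd1.pair ((Computable.fst.comp hnu).pair (Computable.fst.comp hsu)))
    have hA2 : Computable fun x : ℕ × ℕ × ℕ × ℕ × ℕ => R (x.2.1, x.2.2.1.unpair) :=
      hR.comp (hsnd1.pair hnu)
    have hB2 : Computable fun x : ℕ × ℕ × ℕ × ℕ × ℕ =>
        R (x.1, (x.2.2.1.unpair.1, x.2.2.2.1.unpair.2)) :=
      hR.comp (hfst.pair ((Computable.fst.comp hnu).pair (Computable.snd.comp hsu)))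
    exact Computable.cond (Computable.cond hA1 hB1 (Computable.const true))
      (Computable.cond hA2 hB2 (Computable.const true)) (Computable.const false)
  · intro a b
    rw [main a b]
    constructor
    · intro h n
      set n₁ := n.unpair.1 with hn₁
      set s₁ := n.unpair.2 with hs₁
      obtain ⟨sb, hsb⟩ : ∃ sb, (R (a, (n₁, s₁)) = true → R (b, (n₁, sb)) = true) := by
        by_cases hA : R (a, (n₁, s₁)) = true
        · obtain ⟨sb, hsb⟩ := (hInd b n₁).1 ((h n₁).1 ((hInd a n₁).2 ⟨s₁, hA⟩))
          exact ⟨sb, fun _ => hsb⟩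
        · exact ⟨0, fun hc => absurd hc hA⟩
      obtain ⟨sa, hsa⟩ : ∃ sa, (R (b, (n₁, s₁)) = true → R (a, (n₁, sa)) = true) := by
        by_cases hA : R (b, (n₁, s₁)) = true
        · obtain ⟨sa, hsa⟩ := (hInd a n₁).1 ((h n₁).2 ((hInd b n₁).2 ⟨s₁, hA⟩))
          exact ⟨sa, fun _ => hsa⟩
        · exact ⟨0, fun hc => absurd hc hA⟩
      refine ⟨Nat.pair sb sa, fun t => ?_⟩
      simp only [Nat.unpair_pair]
      have hnup : n.unpair = (n₁, s₁) := by rw [hn₁, hs₁]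
      rw [hnup]
      rcases Bool.eq_false_or_eq_true (R (a, (n₁, s₁))) with hA | hA <;>
        rcases Bool.eq_false_or_eq_true (R (b, (n₁, s₁))) with hB | hB <;>
          simp [hA, hB, hsb, hsa]
    · intro h n
      constructor
      · intro hIa
        obtain ⟨s₁, hs₁⟩ := (hInd a n).1 hIa
        obtain ⟨s, hS⟩ := h (Nat.pair n s₁)
        have := hS 0
        simp only [Nat.unpair_pair, hs₁, cond_true] at this
        rcases Bool.eq_false_or_eq_true (R (b, (n, s.unpair.1))) with hB | hB
        · exact (hInd b n).2 ⟨s.unpair.1, hB⟩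
        · simp [hB] at this
      · intro hIb
        obtain ⟨s₁, hs₁⟩ := (hInd b n).1 hIb
        obtain ⟨s, hS⟩ := h (Nat.pair n s₁)
        have := hS 0
        simp only [Nat.unpair_pair, hs₁, cond_true] at this
        rcases Bool.eq_false_or_eq_true (R (a, (n, s.unpair.2))) with hA | hA
        · exact (hInd a n).2 ⟨s.unpair.2, hA⟩
        · simp [hA, hs₁] at this
end

section
/- Let A and B be mutually generic subsets of ω for the forcing with conditions pairs (p₁,p₂) of finite partial functions ω → 2 (finite binary strings). Then A and B are bi-immune: for every partial computable function f, if ran(f↾A) is infinite it is not contained in B, and symmetrically. -/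
/-- The binary string `p` is an initial-segment condition for the set `A`. -/
def AgreesWith (p : List Bool) (A : Set ℕ) : Prop :=
  ∀ i : ℕ, (h : i < p.length) → (p.get ⟨i, h⟩ = true ↔ i ∈ A)

/-- One pair of conditions extends another. -/
def CondExtends (q p : List Bool × List Bool) : Prop :=
  p.1 <+: q.1 ∧ p.2 <+: q.2

/-- `(A, B)` is mutually 1-generic for forcing with pairs of binary strings:
every dense `Σ⁰₁` (c.e.) set of conditions is met by a pair of initial
segments of (the characteristic functions of) `A` and `B`. -/
def MutuallyGeneric (A B : Set ℕ) : Prop :=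
  ∀ D : Set (List Bool × List Bool),
    REPred (fun p => p ∈ D) →
    (∀ p : List Bool × List Bool, ∃ q ∈ D, CondExtends q p) →
    ∃ q ∈ D, AgreesWith q.1 A ∧ AgreesWith q.2 B

open Nat.Partrec (Code)
open Nat.Partrec.Code

/-- The "search" predicate: at stage `n = ⟨a, k⟩`, check that `p.1` asserts
`a ∈ A`, that `evaln k c a = some y`, and that `p.2` asserts `y ∉ B`. -/
def QPred (c : Code) (p : List Bool × List Bool) (n : ℕ) : Bool :=
  p.1.getD n.unpair.1 false &&
    (Option.casesOn (evaln n.unpair.2 c n.unpair.1) false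
      (fun y => !(p.2.getD y true)))

lemma qPred_primrec (c : Code) : Primrec₂ (QPred c) := by
  have ha : Primrec fun x : (List Bool × List Bool) × ℕ => x.2.unpair.1 :=
    Primrec.fst.comp (Primrec.unpair.comp Primrec.snd)
  have hk : Primrec fun x : (List Bool × List Bool) × ℕ => x.2.unpair.2 :=
    Primrec.snd.comp (Primrec.unpair.comp Primrec.snd)
  have h1 : Primrec fun x : (List Bool × List Bool) × ℕ =>
      x.1.1.getD x.2.unpair.1 false :=
    (Primrec.list_getD false).comp (Primrec.fst.comp Primrec.fst) ha
  have hev : Primrec fun x : (List Bool × List Bool) × ℕ =>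
      evaln x.2.unpair.2 c x.2.unpair.1 :=
    primrec_evaln.comp ((hk.pair (Primrec.const c)).pair ha)
  have h2 : Primrec fun x : (List Bool × List Bool) × ℕ =>
      (Option.casesOn (evaln x.2.unpair.2 c x.2.unpair.1) false
        (fun y => !(x.1.2.getD y true)) : Bool) :=
    Primrec.option_casesOn hev (Primrec.const false)
      (Primrec.not.comp₂
        (((Primrec.list_getD true).comp
          (Primrec.snd.comp (Primrec.fst.comp Primrec.fst))
          Primrec.snd).to₂))
  exact (Primrec.and.comp h1 h2).to₂

/-- The dense c.e. set of conditions used in the density argument. -/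
def DSet (f : ℕ →. ℕ) : Set (List Bool × List Bool) :=
  {p | ∃ a y, p.1.getD a false = true ∧ y ∈ f a ∧ p.2.getD y true = false}

lemma mem_DSet_iff {f : ℕ →. ℕ} {c : Code} (hc : eval c = f)
    (p : List Bool × List Bool) :
    p ∈ DSet f ↔ ∃ n, QPred c p n = true := by
  constructor
  · rintro ⟨a, y, h1, h2, h3⟩
    rw [← hc] at h2
    obtain ⟨k, hk⟩ := evaln_complete.1 h2
    refine ⟨Nat.pair a k, ?_⟩
    have : evaln k c a = some y := hk
    simp only [QPred, Nat.unpair_pair, this]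
    simp only [List.getD_eq_getElem?_getD] at h1 h3
    simp [h1, h3]
  · rintro ⟨n, hn⟩
    unfold QPred at hn
    rw [Bool.and_eq_true] at hn
    obtain ⟨h1, h2⟩ := hn
    rcases he : evaln n.unpair.2 c n.unpair.1 with _ | y
    · rw [he] at h2; simp at h2
    · rw [he] at h2
      refine ⟨n.unpair.1, y, h1, ?_, ?_⟩
      · rw [← hc]; exact evaln_sound (Option.mem_def.2 he)
      · simpa using h2
  
lemma DSet_re {f : ℕ →. ℕ} (hf : Nat.Partrec f) : REPred (fun p => p ∈ DSet f) := by
  obtain ⟨c, hc⟩ := Code.exists_code.1 hf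
  have hpar : Partrec fun p : List Bool × List Bool =>
      Nat.rfind (fun n => Part.some (QPred c p n)) :=
    Partrec.rfind ((qPred_primrec c).to_comp.partrec₂)
  have : REPred fun p : List Bool × List Bool =>
      (Nat.rfind (fun n => Part.some (QPred c p n))).Dom := hpar.dom_re
  refine this.of_eq fun p => ?_
  refine Nat.rfind_dom.trans ?_
  constructor
  · rintro ⟨n, hn, _⟩
    exact (mem_DSet_iff hc p).2 ⟨n, by simpa using hn⟩
  · intro hp
    obtain ⟨n, hn⟩ := (mem_DSet_iff hc p).1 hp
    exact ⟨n, by simpa using hn, fun _ => trivial⟩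

lemma getD_false_spec {l : List Bool} {i : ℕ} (h : l.getD i false = true) :
    ∃ hi : i < l.length, l.get ⟨i, hi⟩ = true := by
  by_cases hi : i < l.length
  · exact ⟨hi, by rwa [List.getD_eq_getElem _ _ hi] at h⟩
  · rw [List.getD_eq_default _ _ (le_of_not_gt hi)] at h; simp at h

lemma getD_true_spec {l : List Bool} {i : ℕ} (h : l.getD i true = false) :
    ∃ hi : i < l.length, l.get ⟨i, hi⟩ = false := by
  by_cases hi : i < l.length
  · exact ⟨hi, by rwa [List.getD_eq_getElem _ _ hi] at h⟩
  · rw [List.getD_eq_default _ _ (le_of_not_gt hi)] at h; simp at h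

lemma getD_pad {α : Type*} (l : List α) (e x d : α) {i : ℕ} (h : l.length ≤ i) :
    (l ++ (List.replicate (i - l.length) e ++ [x])).getD i d = x := by
  rw [← List.append_assoc]
  have hlen : (l ++ List.replicate (i - l.length) e).length = i := by
    simp [Nat.add_sub_cancel' h]
  rw [List.getD_append_right _ _ _ _ (le_of_eq hlen), hlen, Nat.sub_self]
  rfl

/-- Main lemma: one direction of bi-immunity. -/
lemma key_lemma (A B : Set ℕ) (hgen : MutuallyGeneric A B) (f : ℕ →. ℕ)
    (hf : Nat.Partrec f) (hinf : (ranRestrict f A).Infinite) :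
    ¬ ranRestrict f A ⊆ B := by
  intro hsub
  -- Density of `DSet f`.
  have hdense : ∀ p : List Bool × List Bool, ∃ q ∈ DSet f, CondExtends q p := by
    intro p
    -- the finite set of "unavoidable" values
    set S : Set ℕ := {y | ∃ a < p.1.length, y ∈ f a} ∪ {y | y < p.2.length} with hS
    have hSfin : S.Finite := by
      apply Set.Finite.union
      · have : {y | ∃ a < p.1.length, y ∈ f a} =
            ⋃ a ∈ {a : ℕ | a < p.1.length}, {y | y ∈ f a} := by
          ext y; simp [Set.mem_iUnion]
        rw [this]
        exact Set.Finite.biUnion (Set.finite_lt_nat _)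
          (fun a _ => Set.Subsingleton.finite (fun x hx y hy => Part.mem_unique hx hy))
      · exact Set.finite_lt_nat _
    obtain ⟨y, hy, hyS⟩ := hinf.exists_notMem_finite hSfin
    obtain ⟨a, haA, hya⟩ := hy
    have hap : p.1.length ≤ a := by
      by_contra h
      exact hyS (Or.inl ⟨a, lt_of_not_ge h, hya⟩)
    have hyp : p.2.length ≤ y := by
      by_contra h
      exact hyS (Or.inr (lt_of_not_ge h))
    refine ⟨(p.1 ++ (List.replicate (a - p.1.length) false ++ [true]),
             p.2 ++ (List.replicate (y - p.2.length) true ++ [false])), ?_, ?_, ?_⟩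
    · exact ⟨a, y, getD_pad _ _ _ _ hap, hya, getD_pad _ _ _ _ hyp⟩
    · exact List.prefix_append _ _
    · exact List.prefix_append _ _
  -- Apply genericity.
  obtain ⟨q, hqD, hq1, hq2⟩ := hgen (DSet f) (DSet_re hf) hdense
  obtain ⟨a, y, h1, h2, h3⟩ := hqD
  obtain ⟨ha, ha'⟩ := getD_false_spec h1
  obtain ⟨hy, hy'⟩ := getD_true_spec h3
  have haA : a ∈ A := (hq1 a ha).1 ha'
  have hyB : y ∈ B := hsub ⟨a, haA, h2⟩
  have : q.2.get ⟨y, hy⟩ = true := (hq2 y hy).2 hyB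
  rw [hy'] at this
  exact Bool.false_ne_true this

lemma mutuallyGeneric_swap {A B : Set ℕ} (h : MutuallyGeneric A B) :
    MutuallyGeneric B A := by
  intro D hD hdense
  set D' : Set (List Bool × List Bool) := {p | (p.2, p.1) ∈ D} with hD'
  have hre : REPred (fun p => p ∈ D') := by
    have hswap : Computable fun p : List Bool × List Bool => (p.2, p.1) :=
      Computable.snd.pair Computable.fst
    exact hD.comp hswap
  have hdense' : ∀ p : List Bool × List Bool, ∃ q ∈ D', CondExtends q p := by
    intro p
    obtain ⟨q, hq, hx1, hx2⟩ := hdense (p.2, p.1)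
    exact ⟨(q.2, q.1), by simpa [hD'] using hq, hx2, hx1⟩
  obtain ⟨q, hq, h1, h2⟩ := h D' hre hdense'
  exact ⟨(q.2, q.1), hq, h2, h1⟩

/-- Mutually generic sets are bi-immune. -/
theorem mutuallyGeneric_biImmune (A B : Set ℕ)
    (hgen : MutuallyGeneric A B) : BiImmune A B := by
  intro f hf
  exact ⟨key_lemma A B hgen f hf,
    key_lemma B A (mutuallyGeneric_swap hgen) f hf⟩
end
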